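/- Let A₁ be an n×n signed bipartite adjacency matrix with parts of sizes s and n−s, and let A₂ be an m×m signed adjacency matrix. Let λ, μ ≥ 0 be real numbers such that A₁² − λ²·I_n and A₂² − μ²·I_m are positive semidefinite (i.e. λ² and μ² are lower bounds for the eigenvalues of A₁² and A₂², as when λ² and μ² are the minimum eigenvalues of A₁² and A₂²). Assume that n = 2s, or that the characteristic polynomial of A₂ equals the characteristic polynomial of −A₂. Let 𝒜' = (A₁ + D)⊗A₂ be the signed semi-strong product matrix. Then for every subset S of the mn row indices of 𝒜' with |S| = ⌊mn/2⌋ + 1, there exists u ∈ S such that #{v ∈ S : 𝒜'_{uv} ≠ 0} ≥ √((λ² + 1)·μ²). -/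

import Mathlib

open Matrix Kronecker

section AuxLemmas
open Matrix Kronecker Polynomial
set_option linter.unusedSectionVars false

variable {ι : Type*} [Fintype ι] [DecidableEq ι]

lemma auxEvalCharpoly (M : Matrix ι ι ℝ) (x : ℝ) :
    (M.charpoly).eval x = (x • (1 : Matrix ι ι ℝ) - M).det := by
  have h : (M.charmatrix).map (evalRingHom x) = x • (1 : Matrix ι ι ℝ) - M := by
    ext i j
    by_cases h : i = j
    · subst h; simp [Matrix.charmatrix_apply_eq]
    · simp [Matrix.charmatrix_apply_ne _ _ _ h, Matrix.one_apply_ne h]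
  have h2 := RingHom.map_det (evalRingHom x) M.charmatrix
  rw [show M.charpoly = M.charmatrix.det from rfl,
    show eval x M.charmatrix.det = (evalRingHom x) M.charmatrix.det from rfl, h2,
    RingHom.mapMatrix_apply, h]

lemma auxSpecReal (B : Matrix ι ι ℝ) (h : B.IsSymm) :
    ∃ (U : Matrix ι ι ℝ) (c : ι → ℝ),
      U * Uᵀ = 1 ∧ Uᵀ * U = 1 ∧ B = U * Matrix.diagonal c * Uᵀ := by
  have hH : B.IsHermitian := by
    rwa [Matrix.IsHermitian, Matrix.conjTranspose_eq_transpose_of_trivial]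
  have hst : (star (hH.eigenvectorUnitary : Matrix ι ι ℝ)) = (hH.eigenvectorUnitary : Matrix ι ι ℝ)ᵀ := by
    rw [Matrix.star_eq_conjTranspose, Matrix.conjTranspose_eq_transpose_of_trivial]
  refine ⟨(hH.eigenvectorUnitary : Matrix ι ι ℝ), hH.eigenvalues, ?_, ?_, ?_⟩
  · have := (Matrix.mem_unitaryGroup_iff).mp hH.eigenvectorUnitary.2
    rwa [hst] at this
  · have := (Matrix.mem_unitaryGroup_iff').mp hH.eigenvectorUnitary.2
    rwa [hst] at this
  · have := hH.spectral_theorem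
    rwa [Unitary.conjStarAlgAut_apply, hst, show (RCLike.ofReal ∘ hH.eigenvalues : ι → ℝ) = hH.eigenvalues from rfl] at this

variable {ι : Type*} [Fintype ι] [DecidableEq ι]

lemma auxDetSmulOneSub (U : Matrix ι ι ℝ) (c : ι → ℝ) (h1 : U * Uᵀ = 1) (x : ℝ) :
    (x • (1 : Matrix ι ι ℝ) - U * Matrix.diagonal c * Uᵀ).det = ∏ i, (x - c i) := by
  have hdet : U.det * Uᵀ.det = 1 := by
    rw [← Matrix.det_mul, h1, Matrix.det_one]
  have key : x • (1 : Matrix ι ι ℝ) - U * Matrix.diagonal c * Uᵀ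
      = U * (x • (1 : Matrix ι ι ℝ) - Matrix.diagonal c) * Uᵀ := by
    rw [Matrix.mul_sub, Matrix.sub_mul, Matrix.mul_smul, Matrix.mul_one, Matrix.smul_mul, h1]
  rw [key, Matrix.det_mul, Matrix.det_mul, mul_comm U.det, mul_assoc, hdet, mul_one,
    Matrix.smul_one_eq_diagonal, Matrix.diagonal_sub, Matrix.det_diagonal]

lemma auxSqLB (U : Matrix ι ι ℝ) (c : ι → ℝ) (h1 : U * Uᵀ = 1) (h2 : Uᵀ * U = 1) (α : ℝ)
    (h : ((U * Matrix.diagonal c * Uᵀ) * (U * Matrix.diagonal c * Uᵀ) - α • 1).PosSemidef) :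
    ∀ i, α ≤ c i ^ 2 := by
  have hsq : (U * Matrix.diagonal c * Uᵀ) * (U * Matrix.diagonal c * Uᵀ)
      = U * (Matrix.diagonal c * Matrix.diagonal c) * Uᵀ := by
    simp only [Matrix.mul_assoc]
    rw [← Matrix.mul_assoc Uᵀ U, h2, Matrix.one_mul]
  rw [hsq] at h
  have hconj := h.conjTranspose_mul_mul_same U
  have hUt : Uᴴ = Uᵀ := Matrix.conjTranspose_eq_transpose_of_trivial U
  rw [hUt] at hconj
  have heq : Uᵀ * (U * (Matrix.diagonal c * Matrix.diagonal c) * Uᵀ - α • 1) * U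
      = Matrix.diagonal (fun i => c i * c i - α) := by
    rw [Matrix.mul_sub, Matrix.sub_mul]
    have : Uᵀ * (U * (Matrix.diagonal c * Matrix.diagonal c) * Uᵀ) * U
        = Matrix.diagonal c * Matrix.diagonal c := by
      simp only [Matrix.mul_assoc]
      rw [h2, Matrix.mul_one, ← Matrix.mul_assoc, h2, Matrix.one_mul]
    rw [this, Matrix.mul_smul, Matrix.mul_one, Matrix.smul_mul, h2,
      Matrix.diagonal_mul_diagonal, Matrix.smul_one_eq_diagonal, Matrix.diagonal_sub]
  rw [heq] at hconj
  intro i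
  have := (Matrix.posSemidef_diagonal_iff.mp hconj) i
  nlinarith [this]

lemma auxCountSym (c : ι → ℝ)
    (h : ∀ x : ℝ, x ≠ 1 → x ≠ -1 → ∏ i, (x - c i) = ∏ i, (x + c i)) :
    (Finset.univ.filter fun i => 0 < c i).card
      = (Finset.univ.filter fun i => c i < 0).card := by
  classical
  set M1 : Multiset ℝ := Finset.univ.val.map c with hM1
  set M2 : Multiset ℝ := Finset.univ.val.map (fun i => -c i) with hM2
  have hpq : (M1.map fun a => X - C a).prod = (M2.map fun a => X - C a).prod := by
    apply Polynomial.eq_of_infinite_eval_eq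
    have hinf : ({1, -1}ᶜ : Set ℝ).Infinite :=
      ((Set.finite_singleton (-1 : ℝ)).insert 1).infinite_compl
    refine hinf.mono ?_
    intro x hx
    simp only [Set.mem_compl_iff, Set.mem_insert_iff, Set.mem_singleton_iff, not_or] at hx
    show Polynomial.eval x _ = Polynomial.eval x _
    rw [Polynomial.eval_multiset_prod, Polynomial.eval_multiset_prod, hM1, hM2,
      Multiset.map_map, Multiset.map_map, Multiset.map_map, Multiset.map_map]
    simp only [Function.comp, Polynomial.eval_sub, Polynomial.eval_X, Polynomial.eval_C]
    rw [← Finset.prod_eq_multiset_prod, ← Finset.prod_eq_multiset_prod]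
    simp only [sub_neg_eq_add]
    exact h x hx.1 hx.2
  have hroots := congrArg Polynomial.roots hpq
  rw [Polynomial.roots_multiset_prod_X_sub_C, Polynomial.roots_multiset_prod_X_sub_C] at hroots
  have hcount := congrArg (Multiset.countP (fun x : ℝ => 0 < x)) hroots
  rw [hM1, hM2, Multiset.countP_map, Multiset.countP_map] at hcount
  have e2 : (Finset.univ.filter fun i => c i < 0) = (Finset.univ.filter fun i => 0 < -c i) := by
    apply Finset.filter_congr; intro a _; simp [neg_pos]
  rw [e2]
  calc (Finset.univ.filter fun i => 0 < c i).card
      = Multiset.card (Multiset.filter (fun a => 0 < c a) Finset.univ.val) := rfl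
    _ = Multiset.card (Multiset.filter (fun a => 0 < -c a) Finset.univ.val) := hcount
    _ = (Finset.univ.filter fun i => 0 < -c i).card := rfl

variable {ι : Type*} [Fintype ι] [DecidableEq ι]

lemma auxKey (B U : Matrix ι ι ℝ) (g : ι → ℝ) (h1 : U * Uᵀ = 1) (h2 : Uᵀ * U = 1)
    (hB : B = U * Matrix.diagonal g * Uᵀ) (hBle : ∀ u v, |B u v| ≤ 1)
    (θ : ℝ) (hθ : 0 ≤ θ) (S : Finset ι)
    (hcount : Fintype.card ι < S.card + (Finset.univ.filter fun k => θ ≤ g k).card) :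
    ∃ u ∈ S, θ ≤ ((S.filter fun v => B u v ≠ 0).card : ℝ) := by
  classical
  set T : Finset ι := Finset.univ.filter fun k => θ ≤ g k with hT
  set Tc : Finset ι := Finset.univ.filter fun k => ¬ θ ≤ g k with hTc
  -- symmetry of B
  have hBsymm : ∀ u v, B u v = B v u := by
    intro u v
    have : Bᵀ = B := by
      rw [hB, Matrix.transpose_mul, Matrix.transpose_mul, Matrix.transpose_transpose,
        Matrix.diagonal_transpose, Matrix.mul_assoc]
    conv_lhs => rw [← this]
    rfl
  -- cardinality of Tc
  have hTcc : T.card + Tc.card = Fintype.card ι := by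
    rw [hT, hTc, Finset.card_filter_add_card_filter_not, Finset.card_univ]
  have hTcS : Tc.card < S.card := by omega
  -- the linear map
  set M : Matrix ↥Tc ↥S ℝ := fun k v => U (v : ι) (k : ι) with hM
  have hnotinj : ¬ Function.Injective M.mulVecLin := by
    intro hinj
    have := LinearMap.finrank_le_finrank_of_injective hinj
    simp only [Module.finrank_pi, Fintype.card_coe] at this
    omega
  rw [Function.not_injective_iff] at hnotinj
  obtain ⟨a, b, hab, hne⟩ := hnotinj
  set cvec : ↥S → ℝ := a - b with hcvec
  have hcne : cvec ≠ 0 := sub_ne_zero.mpr hne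
  have hLc : M.mulVecLin cvec = 0 := by
    rw [hcvec, map_sub, hab, sub_self]
  -- the vector x
  set x : ι → ℝ := fun v => if h : v ∈ S then cvec ⟨v, h⟩ else 0 with hx
  have hxS : ∀ v, v ∉ S → x v = 0 := fun v hv => dif_neg hv
  obtain ⟨v₀, hv₀⟩ := Function.ne_iff.mp hcne
  have hxv₀ : x (v₀ : ι) ≠ 0 := by
    rw [hx]; simpa [dif_pos v₀.2] using hv₀
  -- y
  set y : ι → ℝ := x ᵥ* U with hy
  have hyTc : ∀ k, k ∈ Tc → y k = 0 := by
    intro k hk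
    have h0 : M.mulVecLin cvec ⟨k, hk⟩ = 0 := by rw [hLc]; rfl
    rw [Matrix.mulVecLin_apply] at h0
    have : y k = ∑ v : ↥S, M ⟨k, hk⟩ v * cvec v := by
      rw [hy]
      show ∑ v, x v * U v k = _
      rw [← Finset.sum_subset (Finset.subset_univ S) (fun v _ hv => by rw [hxS v hv, zero_mul])]
      rw [← Finset.sum_attach S (fun v => x v * U v k)]
      refine Finset.sum_congr rfl fun v _ => ?_
      rw [hM]
      simp only [hx, dif_pos v.2]
      ring
    rw [this, ← h0]; rfl
  -- quadratic identities
  have hyy : y ⬝ᵥ y = x ⬝ᵥ x := by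
    rw [hy, ← Matrix.mulVec_transpose, Matrix.dotProduct_mulVec, Matrix.vecMul_transpose,
      Matrix.mulVec_mulVec, h1, Matrix.one_mulVec]
  have hquad : x ⬝ᵥ (B *ᵥ x) = ∑ k, g k * (y k * y k) := by
    rw [hB, ← Matrix.mulVec_mulVec, ← Matrix.mulVec_mulVec, Matrix.dotProduct_mulVec,
      ← hy, Matrix.mulVec_transpose, ← hy]
    simp only [dotProduct, Matrix.mulVec_diagonal]
    exact Finset.sum_congr rfl fun k _ => by ring
  -- lower bound for the quadratic form
  have hlow : θ * (x ⬝ᵥ x) ≤ x ⬝ᵥ (B *ᵥ x) := by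
    rw [hquad, ← hyy]
    have : y ⬝ᵥ y = ∑ k, y k * y k := rfl
    rw [this, Finset.mul_sum]
    refine Finset.sum_le_sum fun k _ => ?_
    by_cases hk : k ∈ Tc
    · rw [hyTc k hk]; simp
    · have hkT : θ ≤ g k := by
        by_contra hc
        exact hk (Finset.mem_filter.mpr ⟨Finset.mem_univ k, hc⟩)
      exact mul_le_mul_of_nonneg_right hkT (mul_self_nonneg _)
  -- maximal degree vertex
  set d : ι → ℕ := fun u => (S.filter fun v => B u v ≠ 0).card with hd
  obtain ⟨u₀, hu₀S, hu₀max⟩ := S.exists_max_image d ⟨(v₀ : ι), v₀.2⟩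
  refine ⟨u₀, hu₀S, ?_⟩
  -- upper bound for the quadratic form
  set f : ι → ι → ℝ := fun u v => if B u v ≠ 0 then x u * x u / 2 else 0 with hf
  have hres : x ⬝ᵥ (B *ᵥ x) = ∑ u ∈ S, ∑ v ∈ S, x u * (B u v * x v) := by
    have e1 : x ⬝ᵥ (B *ᵥ x) = ∑ u, ∑ v, x u * (B u v * x v) := by
      simp only [dotProduct, Matrix.mulVec, Finset.mul_sum]
    rw [e1, ← Finset.sum_subset (Finset.subset_univ S)
      (fun u _ hu => by simp [hxS u hu])]
    exact Finset.sum_congr rfl fun u _ => (Finset.sum_subset (Finset.subset_univ S)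
      (fun v _ hv => by simp [hxS v hv])).symm
  have hstep2 : ∑ u ∈ S, ∑ v ∈ S, x u * (B u v * x v) ≤ ∑ u ∈ S, ∑ v ∈ S, (f u v + f v u) := by
    refine Finset.sum_le_sum fun u _ => Finset.sum_le_sum fun v _ => ?_
    by_cases h0 : B u v = 0
    · have h0' : B v u = 0 := (hBsymm v u).trans h0
      simp [hf, h0, h0']
    · have h0' : B v u ≠ 0 := fun hc => h0 ((hBsymm u v).trans hc)
      simp only [hf, if_pos h0, if_pos h0', ne_eq, not_false_iff]
      have hb := hBle u v
      have e1 : x u * (B u v * x v) ≤ |x u| * |x v| := by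
        calc x u * (B u v * x v) ≤ |x u * (B u v * x v)| := le_abs_self _
        _ = |B u v| * (|x u| * |x v|) := by rw [abs_mul, abs_mul]; ring
        _ ≤ 1 * (|x u| * |x v|) :=
          mul_le_mul_of_nonneg_right hb (mul_nonneg (abs_nonneg _) (abs_nonneg _))
        _ = |x u| * |x v| := one_mul _
      nlinarith [sq_nonneg (|x u| - |x v|), sq_abs (x u), sq_abs (x v)]
  have hstep3 : ∑ u ∈ S, ∑ v ∈ S, (f u v + f v u) = 2 * ∑ u ∈ S, ∑ v ∈ S, f u v := by
    have e : ∑ u ∈ S, ∑ v ∈ S, (f u v + f v u)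
        = (∑ u ∈ S, ∑ v ∈ S, f u v) + (∑ u ∈ S, ∑ v ∈ S, f v u) := by
      simp [Finset.sum_add_distrib]
    rw [e, Finset.sum_comm (s := S) (t := S) (f := fun u v => f v u)]; ring
  have hstep4 : 2 * ∑ u ∈ S, ∑ v ∈ S, f u v = ∑ u ∈ S, (d u : ℝ) * (x u * x u) := by
    rw [Finset.mul_sum]
    refine Finset.sum_congr rfl fun u _ => ?_
    rw [hf]
    rw [← Finset.sum_filter (fun v => B u v ≠ 0) (fun _ => x u * x u / 2)]
    rw [Finset.sum_const, nsmul_eq_mul, hd]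
    ring
  have hstep5 : ∑ u ∈ S, (d u : ℝ) * (x u * x u) ≤ (d u₀ : ℝ) * (x ⬝ᵥ x) := by
    have e : x ⬝ᵥ x = ∑ u ∈ S, x u * x u := by
      show ∑ u, x u * x u = _
      rw [← Finset.sum_subset (Finset.subset_univ S) (fun u _ hu => by rw [hxS u hu]; ring)]
    rw [e, Finset.mul_sum]
    refine Finset.sum_le_sum fun u hu => ?_
    exact mul_le_mul_of_nonneg_right (by exact_mod_cast hu₀max u hu) (mul_self_nonneg _)
  have hxx : 0 < x ⬝ᵥ x := by
    have : x ⬝ᵥ x = ∑ u, x u * x u := rfl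
    rw [this]
    refine Finset.sum_pos' (fun u _ => mul_self_nonneg _) ⟨(v₀ : ι), Finset.mem_univ _, ?_⟩
    exact mul_self_pos.mpr hxv₀
  have hfinal : θ * (x ⬝ᵥ x) ≤ (d u₀ : ℝ) * (x ⬝ᵥ x) := by
    calc θ * (x ⬝ᵥ x) ≤ x ⬝ᵥ (B *ᵥ x) := hlow
      _ = ∑ u ∈ S, ∑ v ∈ S, x u * (B u v * x v) := hres
      _ ≤ ∑ u ∈ S, ∑ v ∈ S, (f u v + f v u) := hstep2
      _ = 2 * ∑ u ∈ S, ∑ v ∈ S, f u v := hstep3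
      _ = ∑ u ∈ S, (d u : ℝ) * (x u * x u) := hstep4
      _ ≤ (d u₀ : ℝ) * (x ⬝ᵥ x) := hstep5
  have hfin2 : θ ≤ (d u₀ : ℝ) := by nlinarith [hfinal, hxx]
  exact hfin2

lemma auxSchur (s : ℕ) (P : Matrix (Fin s) (Fin s) ℝ) {x : ℝ} (hx : x ≠ 1) :
    (x • (1 : Matrix (Fin s ⊕ Fin s) (Fin s ⊕ Fin s) ℝ)
        - Matrix.fromBlocks 1 P Pᵀ (-1)).det
      = ((x ^ 2 - 1) • (1 : Matrix (Fin s) (Fin s) ℝ) - Pᵀ * P).det := by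
  have hxne : x - 1 ≠ 0 := sub_ne_zero.mpr hx
  have hblock : x • (1 : Matrix (Fin s ⊕ Fin s) (Fin s ⊕ Fin s) ℝ)
      - Matrix.fromBlocks 1 P Pᵀ (-1)
      = Matrix.fromBlocks ((x - 1) • 1) (-P) (-Pᵀ) ((x + 1) • 1) := by
    rw [← Matrix.fromBlocks_one, Matrix.fromBlocks_smul, sub_eq_add_neg,
      Matrix.fromBlocks_neg, Matrix.fromBlocks_add]
    simp only [smul_zero, zero_add, neg_neg]
    rw [show x • (1 : Matrix (Fin s) (Fin s) ℝ) + -1 = (x - 1) • 1 from by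
        rw [sub_smul, one_smul, sub_eq_add_neg],
      show x • (1 : Matrix (Fin s) (Fin s) ℝ) + 1 = (x + 1) • 1 from by
        rw [add_smul, one_smul]]
  letI : Invertible ((x - 1) • (1 : Matrix (Fin s) (Fin s) ℝ)) :=
    ⟨(x - 1)⁻¹ • (1 : Matrix (Fin s) (Fin s) ℝ),
     by rw [Matrix.smul_mul, Matrix.mul_smul, Matrix.one_mul, smul_smul,
        inv_mul_cancel₀ hxne, one_smul],
     by rw [Matrix.smul_mul, Matrix.mul_smul, Matrix.one_mul, smul_smul,
        mul_inv_cancel₀ hxne, one_smul]⟩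
  rw [hblock, Matrix.det_fromBlocks₁₁]
  have hinv : (⅟((x - 1) • (1 : Matrix (Fin s) (Fin s) ℝ)))
      = (x - 1)⁻¹ • (1 : Matrix (Fin s) (Fin s) ℝ) := rfl
  rw [hinv]
  have hE : (x + 1) • (1 : Matrix (Fin s) (Fin s) ℝ)
      - (-Pᵀ) * ((x - 1)⁻¹ • (1 : Matrix (Fin s) (Fin s) ℝ)) * (-P)
      = (x - 1)⁻¹ • ((x ^ 2 - 1) • (1 : Matrix (Fin s) (Fin s) ℝ) - Pᵀ * P) := by
    rw [Matrix.mul_smul, Matrix.mul_one, Matrix.smul_mul, neg_mul_neg, smul_sub, smul_smul]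
    congr 1
    rw [show (x - 1)⁻¹ * (x ^ 2 - 1) = x + 1 from by field_simp; ring]
  rw [hE, Matrix.det_smul, Matrix.det_smul, Matrix.det_one, mul_one, ← mul_assoc, ← mul_pow,
    mul_inv_cancel₀ hxne, one_pow, one_mul]

end AuxLemmas

/-- Let `A₁` be an `n × n` signed bipartite adjacency matrix (parts of sizes `s` and `t = n - s`)
and `A₂` an `m × m` signed adjacency matrix, with `λ² ≤` eigenvalues of `A₁²` and `μ² ≤`
eigenvalues of `A₂²` (stated as positive semidefiniteness).  If the bipartition is balanced
(`n = 2s`) or the spectrum of `A₂` is symmetric, then every `(⌊mn/2⌋ + 1)`-vertex induced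
subgraph of the signed semi-strong product `𝒜' = (A₁ + D) ⊗ A₂` has maximum degree at least
`√((λ² + 1)·μ²)`. -/
theorem signed_semi_strong_product_induced_subgraph_max_degree_general
    (s t m : ℕ) (lam mu : ℝ) (hlam : 0 ≤ lam) (hmu : 0 ≤ mu)
    (P : Matrix (Fin s) (Fin t) ℝ)
    (hP : ∀ i j, P i j = -1 ∨ P i j = 0 ∨ P i j = 1)
    (A₂ : Matrix (Fin m) (Fin m) ℝ)
    (hA₂symm : A₂.IsSymm) (hA₂diag : ∀ i, A₂ i i = 0)
    (hA₂ent : ∀ i j, A₂ i j = -1 ∨ A₂ i j = 0 ∨ A₂ i j = 1)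
    (A₁ : Matrix (Fin s ⊕ Fin t) (Fin s ⊕ Fin t) ℝ)
    (hA₁ : A₁ = Matrix.fromBlocks 0 P Pᵀ 0)
    (hpsd₁ : (A₁ * A₁ - (lam ^ 2) • (1 : Matrix (Fin s ⊕ Fin t) (Fin s ⊕ Fin t) ℝ)).PosSemidef)
    (hpsd₂ : (A₂ * A₂ - (mu ^ 2) • (1 : Matrix (Fin m) (Fin m) ℝ)).PosSemidef)
    (hbal : s + t = 2 * s ∨ A₂.charpoly = (-A₂).charpoly)
    (D : Matrix (Fin s ⊕ Fin t) (Fin s ⊕ Fin t) ℝ)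
    (hD : D = Matrix.fromBlocks 1 0 0 (-1))
    (𝒜 : Matrix ((Fin s ⊕ Fin t) × Fin m) ((Fin s ⊕ Fin t) × Fin m) ℝ)
    (h𝒜 : 𝒜 = (A₁ + D) ⊗ₖ A₂)
    (S : Finset ((Fin s ⊕ Fin t) × Fin m))
    (hS : S.card = m * (s + t) / 2 + 1) :
    ∃ u ∈ S, Real.sqrt ((lam ^ 2 + 1) * mu ^ 2) ≤
      ((S.filter (fun v => 𝒜 u v ≠ 0)).card : ℝ) := by
  classical
  set θ : ℝ := Real.sqrt ((lam ^ 2 + 1) * mu ^ 2) with hθdef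
  have hθ0 : 0 ≤ θ := Real.sqrt_nonneg _
  by_cases hμ : mu = 0
  · have hSne : S.Nonempty := Finset.card_pos.mp (by omega)
    obtain ⟨u, hu⟩ := hSne
    refine ⟨u, hu, ?_⟩
    have hz : θ = 0 := by rw [hθdef, hμ]; simp
    rw [hz]
    positivity
  -- main case
  have hmupos : 0 < mu := lt_of_le_of_ne hmu (Ne.symm hμ)
  set C : Matrix (Fin s ⊕ Fin t) (Fin s ⊕ Fin t) ℝ := A₁ + D with hC
  have hCblocks : C = Matrix.fromBlocks 1 P Pᵀ (-1) := by
    rw [hC, hA₁, hD, Matrix.fromBlocks_add, zero_add, add_zero, add_zero, zero_add]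
  have hCsymm : C.IsSymm := by
    rw [Matrix.IsSymm, hCblocks, Matrix.fromBlocks_transpose, Matrix.transpose_one,
      Matrix.transpose_transpose, Matrix.transpose_neg, Matrix.transpose_one]
  obtain ⟨U, c, hU1, hU2, hCd⟩ := auxSpecReal C hCsymm
  obtain ⟨V, a, hV1, hV2, hAd⟩ := auxSpecReal A₂ hA₂symm
  -- C * C = A₁ * A₁ + 1
  have hAD : A₁ * D + D * A₁ = 0 := by
    rw [hA₁, hD, Matrix.fromBlocks_multiply, Matrix.fromBlocks_multiply]
    simp only [Matrix.mul_neg, Matrix.neg_mul, Matrix.mul_one, Matrix.one_mul,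
      Matrix.mul_zero, Matrix.zero_mul, add_zero, zero_add, neg_zero]
    rw [Matrix.fromBlocks_add, ← Matrix.fromBlocks_zero]
    congr 1 <;> simp
  have hDD : D * D = 1 := by
    rw [hD, Matrix.fromBlocks_multiply, ← Matrix.fromBlocks_one]
    simp
  have hCC : C * C = A₁ * A₁ + 1 := by
    have e : C * C = A₁ * A₁ + (A₁ * D + D * A₁) + D * D := by
      rw [hC, add_mul, mul_add, mul_add]; abel
    rw [e, hAD, add_zero, hDD]
  have hpsdC : (C * C - (lam ^ 2 + 1) • (1 : Matrix (Fin s ⊕ Fin t) (Fin s ⊕ Fin t) ℝ)).PosSemidef := by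
    have e : C * C - (lam ^ 2 + 1) • (1 : Matrix (Fin s ⊕ Fin t) (Fin s ⊕ Fin t) ℝ)
        = A₁ * A₁ - (lam ^ 2) • 1 := by
      rw [hCC, add_smul, one_smul]; abel
    rw [e]; exact hpsd₁
  have hc2 : ∀ i, lam ^ 2 + 1 ≤ c i ^ 2 :=
    auxSqLB U c hU1 hU2 _ (by rw [← hCd]; exact hpsdC)
  have ha2 : ∀ j, mu ^ 2 ≤ a j ^ 2 :=
    auxSqLB V a hV1 hV2 _ (by rw [← hAd]; exact hpsd₂)
  have hcne : ∀ i, c i ≠ 0 := by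
    intro i h
    have := hc2 i; rw [h] at this; nlinarith
  have hane : ∀ j, a j ≠ 0 := by
    intro j h
    have := ha2 j; rw [h] at this; nlinarith
  -- Kronecker decomposition
  set W : Matrix ((Fin s ⊕ Fin t) × Fin m) ((Fin s ⊕ Fin t) × Fin m) ℝ := U ⊗ₖ V with hW
  set g : (Fin s ⊕ Fin t) × Fin m → ℝ := fun p => c p.1 * a p.2 with hg
  have hWt : Wᵀ = Uᵀ ⊗ₖ Vᵀ := by rw [hW, Matrix.kroneckerMap_transpose]
  have hW1 : W * Wᵀ = 1 := by
    rw [hW, hWt, ← Matrix.mul_kronecker_mul, hU1, hV1, Matrix.one_kronecker_one]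
  have hW2 : Wᵀ * W = 1 := by
    rw [hW, hWt, ← Matrix.mul_kronecker_mul, hU2, hV2, Matrix.one_kronecker_one]
  have h𝒜W : 𝒜 = W * Matrix.diagonal g * Wᵀ := by
    rw [h𝒜, hCd, hAd, hW, hWt, Matrix.mul_kronecker_mul, Matrix.mul_kronecker_mul,
      Matrix.diagonal_kronecker_diagonal]
  -- entry bounds
  have hCent : ∀ i i', |C i i'| ≤ 1 := by
    intro i i'
    rw [hCblocks]
    rcases i with i | i <;> rcases i' with i' | i'
    · simp only [Matrix.fromBlocks_apply₁₁]
      by_cases h : i = i' <;> simp [Matrix.one_apply, h]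
    · simp only [Matrix.fromBlocks_apply₁₂]
      rcases hP i i' with h | h | h <;> simp [h]
    · simp only [Matrix.fromBlocks_apply₂₁, Matrix.transpose_apply]
      rcases hP i' i with h | h | h <;> simp [h]
    · simp only [Matrix.fromBlocks_apply₂₂, Matrix.neg_apply]
      by_cases h : i = i' <;> simp [Matrix.one_apply, h]
  have hA₂abs : ∀ j j', |A₂ j j'| ≤ 1 := by
    intro j j'; rcases hA₂ent j j' with h | h | h <;> simp [h]
  have hle : ∀ u v, |𝒜 u v| ≤ 1 := by
    intro u v
    rw [h𝒜, Matrix.kroneckerMap_apply, abs_mul]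
    calc |C u.1 v.1| * |A₂ u.2 v.2| ≤ 1 * 1 :=
      mul_le_mul (hCent _ _) (hA₂abs _ _) (abs_nonneg _) zero_le_one
    _ = 1 := one_mul 1
  -- sign sets
  set PosC : Finset (Fin s ⊕ Fin t) := Finset.univ.filter fun i => 0 < c i with hPosC
  set NegC : Finset (Fin s ⊕ Fin t) := Finset.univ.filter fun i => c i < 0 with hNegC
  set PosA : Finset (Fin m) := Finset.univ.filter fun j => 0 < a j with hPosA
  set NegA : Finset (Fin m) := Finset.univ.filter fun j => a j < 0 with hNegA
  have hsplitC : PosC.card + NegC.card = s + t := by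
    have e : (Finset.univ.filter fun i => ¬ 0 < c i) = NegC := by
      refine Finset.filter_congr fun i _ => ?_
      constructor
      · intro h; exact lt_of_le_of_ne (not_lt.mp h) (hcne i)
      · intro h; exact not_lt.mpr h.le
    have := Finset.card_filter_add_card_filter_not
      (s := (Finset.univ : Finset (Fin s ⊕ Fin t))) (p := fun i => 0 < c i)
    rw [e] at this
    rw [hPosC, this, Finset.card_univ, Fintype.card_sum, Fintype.card_fin, Fintype.card_fin]
  have hsplitA : PosA.card + NegA.card = m := by
    have e : (Finset.univ.filter fun j => ¬ 0 < a j) = NegA := by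
      refine Finset.filter_congr fun j _ => ?_
      constructor
      · intro h; exact lt_of_le_of_ne (not_lt.mp h) (hane j)
      · intro h; exact not_lt.mpr h.le
    have := Finset.card_filter_add_card_filter_not
      (s := (Finset.univ : Finset (Fin m))) (p := fun j => 0 < a j)
    rw [e] at this
    rw [hPosA, this, Finset.card_univ, Fintype.card_fin]
  -- T and the subset bound
  set T : Finset ((Fin s ⊕ Fin t) × Fin m) := Finset.univ.filter fun k => θ ≤ g k with hT
  have habsc : ∀ i, Real.sqrt (lam ^ 2 + 1) ≤ |c i| := by
    intro i
    rw [← Real.sqrt_sq_eq_abs]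
    exact Real.sqrt_le_sqrt (hc2 i)
  have habsa : ∀ j, mu ≤ |a j| := by
    intro j
    rw [← Real.sqrt_sq_eq_abs]
    calc mu = Real.sqrt (mu ^ 2) := (Real.sqrt_sq hmu).symm
    _ ≤ _ := Real.sqrt_le_sqrt (ha2 j)
  have hθabs : ∀ i j, θ ≤ |c i| * |a j| := by
    intro i j
    rw [hθdef, Real.sqrt_mul (by positivity), Real.sqrt_sq hmu]
    exact mul_le_mul (habsc i) (habsa j) hmu (abs_nonneg _)
  have hTsub : (PosC ×ˢ PosA ∪ NegC ×ˢ NegA) ⊆ T := by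
    intro p hp
    refine Finset.mem_filter.mpr ⟨Finset.mem_univ _, ?_⟩
    rcases Finset.mem_union.mp hp with h | h
    · obtain ⟨h1, h2⟩ := Finset.mem_product.mp h
      have hci : 0 < c p.1 := (Finset.mem_filter.mp h1).2
      have haj : 0 < a p.2 := (Finset.mem_filter.mp h2).2
      calc θ ≤ |c p.1| * |a p.2| := hθabs _ _
      _ = |c p.1 * a p.2| := (abs_mul _ _).symm
      _ = c p.1 * a p.2 := abs_of_pos (mul_pos hci haj)
    · obtain ⟨h1, h2⟩ := Finset.mem_product.mp h
      have hci : c p.1 < 0 := (Finset.mem_filter.mp h1).2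
      have haj : a p.2 < 0 := (Finset.mem_filter.mp h2).2
      calc θ ≤ |c p.1| * |a p.2| := hθabs _ _
      _ = |c p.1 * a p.2| := (abs_mul _ _).symm
      _ = c p.1 * a p.2 := abs_of_pos (mul_pos_of_neg_of_neg hci haj)
  have hdisj : Disjoint (PosC ×ˢ PosA) (NegC ×ˢ NegA) := by
    rw [Finset.disjoint_left]
    intro p hp hp'
    have h1 : 0 < c p.1 := (Finset.mem_filter.mp (Finset.mem_product.mp hp).1).2
    have h2 : c p.1 < 0 := (Finset.mem_filter.mp (Finset.mem_product.mp hp').1).2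
    exact absurd h1 (not_lt.mpr h2.le)
  have hTlb : PosC.card * PosA.card + NegC.card * NegA.card ≤ T.card := by
    calc PosC.card * PosA.card + NegC.card * NegA.card
        = (PosC ×ˢ PosA).card + (NegC ×ˢ NegA).card := by
          rw [Finset.card_product, Finset.card_product]
    _ = ((PosC ×ˢ PosA) ∪ (NegC ×ˢ NegA)).card := (Finset.card_union_of_disjoint hdisj).symm
    _ ≤ T.card := Finset.card_le_card hTsub
  have hcardfull : Fintype.card ((Fin s ⊕ Fin t) × Fin m) = (s + t) * m := by
    simp [Fintype.card_prod, Fintype.card_sum, Fintype.card_fin]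
  -- the counting argument, by cases
  have hcount : Fintype.card ((Fin s ⊕ Fin t) × Fin m) < S.card + T.card := by
    rcases hbal with hbal1 | hbal2
    · -- balanced case
      obtain rfl : t = s := by omega
      have hprod : ∀ x : ℝ, x ≠ 1 → x ≠ -1 → ∏ i, (x - c i) = ∏ i, (x + c i) := by
        intro x hx1 hx2
        have hnx1 : (-x : ℝ) ≠ 1 := fun h => hx2 (by linarith)
        have d1 : (x • (1 : Matrix (Fin t ⊕ Fin t) (Fin t ⊕ Fin t) ℝ) - C).det
            = ∏ i, (x - c i) := by rw [hCd]; exact auxDetSmulOneSub U c hU1 x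
        have d2 : ((-x) • (1 : Matrix (Fin t ⊕ Fin t) (Fin t ⊕ Fin t) ℝ) - C).det
            = ∏ i, (-x - c i) := by rw [hCd]; exact auxDetSmulOneSub U c hU1 (-x)
        have s1 : (x • (1 : Matrix (Fin t ⊕ Fin t) (Fin t ⊕ Fin t) ℝ) - C).det
            = ((x ^ 2 - 1) • (1 : Matrix (Fin t) (Fin t) ℝ) - Pᵀ * P).det := by
          rw [hCblocks]; exact auxSchur t P hx1
        have s2 : ((-x) • (1 : Matrix (Fin t ⊕ Fin t) (Fin t ⊕ Fin t) ℝ) - C).det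
            = (((-x) ^ 2 - 1) • (1 : Matrix (Fin t) (Fin t) ℝ) - Pᵀ * P).det := by
          rw [hCblocks]; exact auxSchur t P hnx1
        rw [show ((-x : ℝ) ^ 2) = x ^ 2 from by ring] at s2
        have e : ∏ i, (x - c i) = ∏ i, (-x - c i) := by
          rw [← d1, ← d2, s1, s2]
        rw [e]
        calc ∏ i, (-x - c i) = ∏ i : Fin t ⊕ Fin t, (-1 : ℝ) * (x + c i) :=
          Finset.prod_congr rfl (fun i _ => by ring)
        _ = (∏ _i : Fin t ⊕ Fin t, (-1 : ℝ)) * ∏ i, (x + c i) := Finset.prod_mul_distrib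
        _ = ∏ i, (x + c i) := by
            rw [Finset.prod_const, Finset.card_univ, Fintype.card_sum, Fintype.card_fin,
              ← two_mul, pow_mul, neg_one_sq, one_pow, one_mul]
      have hsignC : PosC.card = NegC.card := by
        rw [hPosC, hNegC]; exact auxCountSym c hprod
      have hpc : PosC.card = t := by omega
      have hnc : NegC.card = t := by omega
      have hT1 : t * m ≤ T.card := by
        calc t * m = t * (PosA.card + NegA.card) := by rw [hsplitA]
        _ = PosC.card * PosA.card + NegC.card * NegA.card := by rw [hpc, hnc, Nat.mul_add]
        _ ≤ T.card := hTlb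
      rw [hcardfull, hS]
      have hdiv : m * (t + t) / 2 = t * m := by
        rw [show m * (t + t) = 2 * (t * m) from by ring]
        exact Nat.mul_div_cancel_left _ (by norm_num)
      rw [hdiv, show (t + t) * m = t * m + t * m from by ring]
      exact add_lt_add_of_lt_of_le (Nat.lt_succ_self _) hT1
    · -- symmetric spectrum case
      have hprodA : ∀ x : ℝ, x ≠ 1 → x ≠ -1 → ∏ j, (x - a j) = ∏ j, (x + a j) := by
        intro x _ _
        have d1 : (x • (1 : Matrix (Fin m) (Fin m) ℝ) - A₂).det = ∏ j, (x - a j) := by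
          rw [hAd]; exact auxDetSmulOneSub V a hV1 x
        have hnegdec : -A₂ = V * Matrix.diagonal (fun j => -a j) * Vᵀ := by
          have e : Matrix.diagonal (fun j => -a j) = -Matrix.diagonal a := by
            ext i j; by_cases h : i = j <;> simp [h]
          rw [e, Matrix.mul_neg, Matrix.neg_mul, hAd]
        have d2 : (x • (1 : Matrix (Fin m) (Fin m) ℝ) - (-A₂)).det = ∏ j, (x + a j) := by
          rw [hnegdec]
          have := auxDetSmulOneSub V (fun j => -a j) hV1 x
          simpa [sub_neg_eq_add] using this
        have echar : (x • (1 : Matrix (Fin m) (Fin m) ℝ) - A₂).det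
            = (x • (1 : Matrix (Fin m) (Fin m) ℝ) - (-A₂)).det := by
          rw [← auxEvalCharpoly, ← auxEvalCharpoly, hbal2]
        rw [← d1, echar, d2]
      have hsignA : PosA.card = NegA.card := by
        rw [hPosA, hNegA]; exact auxCountSym a hprodA
      have hpa : 2 * PosA.card = m := by omega
      have hT2 : (s + t) * PosA.card ≤ T.card := by
        calc (s + t) * PosA.card = (PosC.card + NegC.card) * PosA.card := by rw [hsplitC]
        _ = PosC.card * PosA.card + NegC.card * NegA.card := by rw [Nat.add_mul, hsignA]
        _ ≤ T.card := hTlb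
      rw [hcardfull, hS]
      have hmm : m * (s + t) = 2 * ((s + t) * PosA.card) := by
        calc m * (s + t) = 2 * PosA.card * (s + t) := by rw [hpa]
        _ = 2 * ((s + t) * PosA.card) := by ring
      have hmm2 : (s + t) * m = (s + t) * PosA.card + (s + t) * PosA.card := by
        calc (s + t) * m = (s + t) * (2 * PosA.card) := by rw [hpa]
        _ = (s + t) * PosA.card + (s + t) * PosA.card := by ring
      have hdiv : m * (s + t) / 2 = (s + t) * PosA.card := by
        rw [hmm]
        exact Nat.mul_div_cancel_left _ (by norm_num)
      rw [hdiv, hmm2]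
      exact add_lt_add_of_lt_of_le (Nat.lt_succ_self _) hT2
  exact auxKey 𝒜 W g hW1 hW2 h𝒜W hle θ hθ0 S hcount
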